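/- Let G be a weighted graph with maximum degree at most 3 and nonnegative edge weights, let T be a spanning tree of G, and suppose every odd cycle in T + e (for any non-tree edge e) has length at least r. Then for every p with 0 ≤ p ≤ 1, mac(G) ≥ ((p+1)/2)·w(T) + ((1 − p^{r−1})/2)·(w(G) − w(T)). -/

import Mathlib

namespace MaxCut

/-- Weight of the cut induced by vertex set `A`: total weight of edges of `G`
with exactly one endpoint in `A`. -/
noncomputable def cutWeight {V : Type*} (G : SimpleGraph V) (w : Sym2 V → ℝ) (A : Set V) : ℝ :=
  ∑ᶠ e ∈ {e ∈ G.edgeSet | ∃ x y, e = s(x, y) ∧ x ∈ A ∧ y ∉ A}, w e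

/-- Total weight of the edges of `G`. -/
noncomputable def totalWeight {V : Type*} (G : SimpleGraph V) (w : Sym2 V → ℝ) : ℝ :=
  ∑ᶠ e ∈ G.edgeSet, w e

/-- Total weight of a set of edges. -/
noncomputable def setWeight {V : Type*} (w : Sym2 V → ℝ) (M : Set (Sym2 V)) : ℝ :=
  ∑ᶠ e ∈ M, w e

/-- `T` is a spanning tree of `G`. -/
def IsSpanningTree {V : Type*} (G T : SimpleGraph V) : Prop := T ≤ G ∧ T.IsTree

/-- `T` is a DFS tree of `G` rooted at `r`: a spanning tree such that every edge of `G`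
joins an ancestor–descendant pair (here `x` is an ancestor of `y` in the tree `T` rooted
at `r` iff `x` lies on the unique `r`–`y` path, equivalently
`T.dist r x + T.dist x y = T.dist r y`). -/
def IsDFSTree {V : Type*} (G T : SimpleGraph V) (r : V) : Prop :=
  T ≤ G ∧ T.IsTree ∧ ∀ x y, G.Adj x y →
    T.dist r x + T.dist x y = T.dist r y ∨ T.dist r y + T.dist y x = T.dist r x

/-- `M` is a matching of `G` (a set of pairwise non-adjacent edges of `G`). -/
def IsMatching {V : Type*} (G : SimpleGraph V) (M : Set (Sym2 V)) : Prop :=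
  M ⊆ G.edgeSet ∧ ∀ e ∈ M, ∀ f ∈ M, e ≠ f → ∀ v, ¬(v ∈ e ∧ v ∈ f)

/-- Every vertex of `G` has degree at most `d`. -/
def MaxDegreeLE {V : Type*} (G : SimpleGraph V) (d : ℕ) : Prop :=
  ∀ v : V, {u | G.Adj v u}.ncard ≤ d

/-! ### Auxiliary material for the probabilistic argument -/

section Aux

open SimpleGraph Finset

variable {V : Type*}

/-- The "is cut" indicator of an edge for a two-coloring `f`. -/
def xr (f : V → Bool) : Sym2 V → Bool :=
  Sym2.lift ⟨fun x y => xor (f x) (f y), fun x y => Bool.xor_comm _ _⟩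

@[simp] lemma xr_mk (f : V → Bool) (x y : V) : xr f s(x, y) = xor (f x) (f y) := rfl

/-- The sign `(-1)^b` of a Boolean. -/
noncomputable def sgn (b : Bool) : ℝ := if b then -1 else 1

lemma sgn_xor (a b : Bool) : sgn (xor a b) = sgn a * sgn b := by
  cases a <;> cases b <;> simp [sgn]

/-- The edge weight used for the random coloring. -/
noncomputable def bq (p : ℝ) (b : Bool) : ℝ := if b then (1 + p) / 2 else (1 - p) / 2

lemma bq_nonneg {p : ℝ} (hp0 : 0 ≤ p) (hp1 : p ≤ 1) (b : Bool) : 0 ≤ bq p b := by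
  cases b <;> simp [bq] <;> linarith

lemma ite_eq_sgn (b : Bool) : (if b then (1 : ℝ) else 0) = (1 - sgn b) / 2 := by
  cases b <;> simp [sgn] <;> norm_num

lemma walk_xor {G : SimpleGraph V} (f : V → Bool) :
    ∀ {x y : V} (W : G.Walk x y),
      xor (f x) (f y) = (W.edges.map (xr f)).foldr xor false := by
  intro x y W
  induction W with
  | nil => simp
  | @cons a c b h W ih =>
      simp only [SimpleGraph.Walk.edges_cons, List.map_cons, List.foldr_cons, ← ih, xr_mk]
      cases f a <;> cases f c <;> cases f b <;> simp

lemma sgn_foldr (l : List Bool) : sgn (l.foldr xor false) = (l.map sgn).prod := by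
  induction l with
  | nil => simp [sgn]
  | cons a l ih => simp [sgn_xor, ih]

lemma eq_on_walk {G : SimpleGraph V} {f g : V → Bool}
    (h : ∀ x y, G.Adj x y → xor (f x) (f y) = xor (g x) (g y)) :
    ∀ {a b : V} (_ : G.Walk a b), f a = g a → f b = g b := by
  intro a b W
  induction W with
  | nil => exact id
  | @cons a c b h' W ih =>
      intro hab
      have hx := h _ _ h'
      rw [hab] at hx
      apply ih
      cases g a <;> simp_all

variable [Fintype V] [DecidableEq V]

lemma phi_bijective (T : SimpleGraph V) [Fintype T.edgeSet] (hT : T.IsTree) (v0 : V) :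
    Function.Bijective (fun f : V → Bool =>
      (f v0, fun e : T.edgeFinset => xr f (e : Sym2 V))) := by
  rw [Fintype.bijective_iff_injective_and_card]
  constructor
  · intro f g hfg
    have h1 : f v0 = g v0 := congrArg Prod.fst hfg
    have h2 : ∀ x y, T.Adj x y → xor (f x) (f y) = xor (g x) (g y) := by
      intro x y hxy
      have he : s(x, y) ∈ T.edgeFinset := by
        rw [SimpleGraph.mem_edgeFinset, SimpleGraph.mem_edgeSet]; exact hxy
      have := congrFun (congrArg Prod.snd hfg) ⟨s(x, y), he⟩
      simpa using this
    funext v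
    exact eq_on_walk h2 ((hT.isConnected.preconnected v0 v).some) h1
  · have hcard := hT.card_edgeFinset
    rw [Fintype.card_fun, Fintype.card_prod, Fintype.card_fun, Fintype.card_bool,
      Fintype.card_coe, ← hcard, pow_succ]
    ring

lemma tree_sum (T : SimpleGraph V) [Fintype T.edgeSet] (hT : T.IsTree) (g : Sym2 V → Bool → ℝ) :
    ∑ f : V → Bool, ∏ e ∈ T.edgeFinset, g e (xr f e)
      = 2 * ∏ e ∈ T.edgeFinset, (g e false + g e true) := by
  obtain ⟨v0⟩ := hT.isConnected.nonempty
  have hbij := phi_bijective T hT v0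
  have step1 :
      ∑ f : V → Bool, ∏ e ∈ T.edgeFinset, g e (xr f e)
        = ∑ bx : Bool × (T.edgeFinset → Bool), ∏ a : T.edgeFinset, g a (bx.2 a) := by
    refine Fintype.sum_bijective _ hbij _ _ fun f => ?_
    rw [← Finset.prod_coe_sort]
  rw [step1, Fintype.sum_prod_type, Fintype.sum_bool]
  have key : ∀ b : Bool,
      (∑ X : T.edgeFinset → Bool, ∏ a : T.edgeFinset, g a (X a))
        = ∏ e ∈ T.edgeFinset, (g e false + g e true) := by
    intro b
    rw [← Finset.prod_coe_sort]
    have := Finset.prod_univ_sum (fun _ : T.edgeFinset => (Finset.univ : Finset Bool))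
      (fun a b => g a b)
    rw [Fintype.piFinset_univ] at this
    rw [← this]
    refine Finset.prod_congr rfl fun a _ => ?_
    rw [Fintype.sum_bool]; ring
  rw [key true]; ring

lemma prob_sgn (T : SimpleGraph V) [Fintype T.edgeSet] (hT : T.IsTree) (p : ℝ)
    (S : Finset (Sym2 V)) (hS : S ⊆ T.edgeFinset) :
    ∑ f : V → Bool,
        (∏ e ∈ T.edgeFinset, bq p (xr f e)) * ∏ e ∈ S, sgn (xr f e)
      = 2 * (-p) ^ S.card := by
  have hinter : T.edgeFinset ∩ S = S := Finset.inter_eq_right.mpr hS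
  have step1 : ∀ f : V → Bool,
      (∏ e ∈ T.edgeFinset, bq p (xr f e)) * ∏ e ∈ S, sgn (xr f e)
        = ∏ e ∈ T.edgeFinset,
            (bq p (xr f e) * if e ∈ S then sgn (xr f e) else 1) := by
    intro f
    rw [Finset.prod_mul_distrib, Finset.prod_ite_mem, hinter]
  simp only [step1]
  rw [tree_sum T hT (fun e b => bq p b * if e ∈ S then sgn b else 1)]
  have : ∀ e, (bq p false * (if e ∈ S then sgn false else 1)
      + bq p true * (if e ∈ S then sgn true else 1)) = if e ∈ S then -p else 1 := by
    intro e
    split_ifs <;> simp [bq, sgn] <;> ring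
  simp only [this]
  rw [Finset.prod_ite_mem, hinter, Finset.prod_const]

lemma marginal (T : SimpleGraph V) [Fintype T.edgeSet] (hT : T.IsTree) (p : ℝ) (e : Sym2 V)
    (S : Finset (Sym2 V)) (hS : S ⊆ T.edgeFinset)
    (hrep : ∀ f : V → Bool, sgn (xr f e) = ∏ e' ∈ S, sgn (xr f e')) :
    ∑ f : V → Bool,
        (∏ e' ∈ T.edgeFinset, bq p (xr f e')) * (if xr f e then (1 : ℝ) else 0)
      = 1 - (-p) ^ S.card := by
  have step : ∀ f : V → Bool,
      (∏ e' ∈ T.edgeFinset, bq p (xr f e')) * (if xr f e then (1 : ℝ) else 0)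
        = ((∏ e' ∈ T.edgeFinset, bq p (xr f e'))
            - (∏ e' ∈ T.edgeFinset, bq p (xr f e')) * ∏ e' ∈ S, sgn (xr f e')) / 2 := by
    intro f
    rw [ite_eq_sgn, hrep f]
    ring
  simp only [step]
  rw [← Finset.sum_div, Finset.sum_sub_distrib]
  have h0 : ∑ f : V → Bool, ∏ e' ∈ T.edgeFinset, bq p (xr f e') = 2 := by
    have := prob_sgn T hT p ∅ (Finset.empty_subset _)
    simpa using this
  rw [h0, prob_sgn T hT p S hS]
  ring

end Aux

/-- Let `G` have maximum degree at most 3, `T` a spanning tree of `G`, and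
suppose every odd cycle of `T + e` (for a non-tree edge `e`) has length at least `r`. Then
for every `0 ≤ p ≤ 1`, `mac(G) ≥ ((p+1)/2)·w(T) + ((1 − p^(r−1))/2)·(w(G) − w(T))`. -/
theorem maxcut_ge_prob_bound {V : Type*} [Fintype V] (r : ℕ)
    (G T : SimpleGraph V) (w : Sym2 V → ℝ) (hw : ∀ e, 0 ≤ w e)
    (hdeg : MaxDegreeLE G 3) (hT : IsSpanningTree G T)
    (hcyc : ∀ e ∈ G.edgeSet, e ∉ T.edgeSet →
      ∀ (v : V) (q : (T ⊔ SimpleGraph.fromEdgeSet {e}).Walk v v),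
        q.IsCycle → Odd q.length → r ≤ q.length)
    (p : ℝ) (hp0 : 0 ≤ p) (hp1 : p ≤ 1) :
    ∃ A : Set V,
      (p + 1) / 2 * totalWeight T w
        + (1 - p ^ (r - 1)) / 2 * (totalWeight G w - totalWeight T w)
        ≤ cutWeight G w A := by
  classical
  haveI : Fintype ↥G.edgeSet := Set.Finite.fintype (Set.toFinite _)
  haveI : Fintype ↥T.edgeSet := Set.Finite.fintype (Set.toFinite _)
  obtain ⟨hle, htree⟩ := hT
  -- notation
  set EG := G.edgeFinset with hEG
  set ET := T.edgeFinset with hET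
  have hsub : ET ⊆ EG := SimpleGraph.edgeFinset_mono hle
  have hTW : totalWeight T w = ∑ e ∈ ET, w e := by
    rw [totalWeight, ← SimpleGraph.coe_edgeFinset, finsum_mem_coe_finset]
  have hGW : totalWeight G w = ∑ e ∈ EG, w e := by
    rw [totalWeight, ← SimpleGraph.coe_edgeFinset, finsum_mem_coe_finset]
  -- the (unnormalized, total mass 2) measure on colorings
  set μ : (V → Bool) → ℝ := fun f => ∏ e ∈ ET, bq p (xr f e) with hμ
  have hμ0 : ∀ f, 0 ≤ μ f :=
    fun f => Finset.prod_nonneg fun e _ => bq_nonneg hp0 hp1 _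
  have hμsum : ∑ f : V → Bool, μ f = 2 := by
    have := prob_sgn T htree p ∅ (Finset.empty_subset _)
    simpa using this
  -- per-edge marginals
  have hmarg : ∀ e ∈ EG,
      (if e ∈ ET then 1 + p else 1 - p ^ (r - 1))
        ≤ ∑ f : V → Bool, μ f * (if xr f e then (1 : ℝ) else 0) := by
    intro e
    induction e using Sym2.ind with | _ x y => ?_
    intro heG
    by_cases heT : s(x, y) ∈ ET
    · -- tree edge: marginal is exactly 1 + p
      rw [if_pos heT]
      have hrep : ∀ f : V → Bool,
          sgn (xr f s(x, y)) = ∏ e' ∈ {s(x, y)}, sgn (xr f e') := by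
        intro f; rw [Finset.prod_singleton]
      have := marginal T htree p s(x, y) {s(x, y)}
        (Finset.singleton_subset_iff.mpr heT) hrep
      simp only [hμ, hET]
      rw [this, Finset.card_singleton, pow_one]
      linarith
    · -- non-tree edge
      rw [if_neg heT]
      have heG' : s(x, y) ∈ G.edgeSet := SimpleGraph.mem_edgeFinset.mp heG
      have heT' : s(x, y) ∉ T.edgeSet := fun h => heT (SimpleGraph.mem_edgeFinset.mpr h)
      · have hadjG : G.Adj x y := (SimpleGraph.mem_edgeSet G).mp heG'
        have hxy : x ≠ y := hadjG.ne
        -- tree path from y to x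
        obtain ⟨P0⟩ := htree.isConnected.preconnected y x
        set P : T.Path y x := P0.toPath with hP
        set S : Finset (Sym2 V) := (P : T.Walk y x).edges.toFinset with hSdef
        have hnodup : (P : T.Walk y x).edges.Nodup := P.2.edges_nodup
        have hSsub : S ⊆ ET := by
          intro e' he'
          rw [hSdef, List.mem_toFinset] at he'
          exact SimpleGraph.mem_edgeFinset.mpr
            (SimpleGraph.Walk.edges_subset_edgeSet _ he')
        have hScard : S.card = (P : T.Walk y x).length := by
          rw [hSdef, List.toFinset_card_of_nodup hnodup, SimpleGraph.Walk.length_edges]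
        set ℓ : ℕ := (P : T.Walk y x).length with hℓ
        have hrep : ∀ f : V → Bool,
            sgn (xr f s(x, y)) = ∏ e' ∈ S, sgn (xr f e') := by
          intro f
          have h1 : xor (f x) (f y) = xor (f y) (f x) := Bool.xor_comm _ _
          have h2 := walk_xor f (P : T.Walk y x)
          rw [xr_mk, h1, h2, sgn_foldr, List.map_map]
          rw [hSdef, List.prod_toFinset _ hnodup]
          rfl
        have hmar := marginal T htree p s(x, y) S hSsub hrep
        simp only [hμ, hET]
        rw [hmar, hScard]
        -- now show 1 - p^(r-1) ≤ 1 - (-p)^ℓ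
        rcases Nat.even_or_odd ℓ with hev | hod
        · -- even path length: the cycle e + P is odd, so ℓ ≥ r - 1
          have hadj' : (T ⊔ SimpleGraph.fromEdgeSet {s(x, y)}).Adj x y := by
            refine Or.inr ?_
            rw [SimpleGraph.fromEdgeSet_adj]
            exact ⟨Set.mem_singleton _, hxy⟩
          set W : (T ⊔ SimpleGraph.fromEdgeSet {s(x, y)}).Walk y x :=
            (P : T.Walk y x).mapLe le_sup_left with hW
          have hWedges : W.edges = (P : T.Walk y x).edges := by
            have hid : Sym2.map
                (⇑(SimpleGraph.Hom.ofLE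
                  (le_sup_left : T ≤ T ⊔ SimpleGraph.fromEdgeSet {s(x, y)}))) = id := by
              funext e'
              induction e' using Sym2.ind with
              | _ a b => rfl
            rw [hW, SimpleGraph.Walk.edges_map, hid, List.map_id]
          have hWpath : W.IsPath := P.2.mapLe _
          have hnotmem : s(x, y) ∉ W.edges := by
            rw [hWedges]
            intro hmem
            exact heT' (SimpleGraph.Walk.edges_subset_edgeSet _ hmem)
          have hcycle : (SimpleGraph.Walk.cons hadj' W).IsCycle :=
            SimpleGraph.Path.cons_isCycle ⟨W, hWpath⟩ hadj' hnotmem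
          have hlen : (SimpleGraph.Walk.cons hadj' W).length = ℓ + 1 := by
            rw [SimpleGraph.Walk.length_cons, hW, SimpleGraph.Walk.length_map]
          have hodd : Odd (SimpleGraph.Walk.cons hadj' W).length := by
            rw [hlen]; exact Even.add_one hev
          have hge := hcyc s(x, y) heG' heT' x (SimpleGraph.Walk.cons hadj' W)
            hcycle hodd
          rw [hlen] at hge
          have hrℓ : r - 1 ≤ ℓ := by omega
          have : p ^ ℓ ≤ p ^ (r - 1) := pow_le_pow_of_le_one hp0 hp1 hrℓ
          rw [hev.neg_pow]
          linarith
        · rw [hod.neg_pow]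
          have h1 : (0 : ℝ) ≤ p ^ ℓ := pow_nonneg hp0 _
          have h2 : (0 : ℝ) ≤ p ^ (r - 1) := pow_nonneg hp0 _
          linarith
  -- cut weight of the coloring f
  set cw : (V → Bool) → ℝ :=
    fun f => ∑ e ∈ EG, w e * (if xr f e then (1 : ℝ) else 0) with hcw
  -- expectation bound
  have hexp : (p + 1) * totalWeight T w
      + (1 - p ^ (r - 1)) * (totalWeight G w - totalWeight T w)
      ≤ ∑ f : V → Bool, μ f * cw f := by
    have hswap : ∑ f : V → Bool, μ f * cw f
        = ∑ e ∈ EG, w e * ∑ f : V → Bool, μ f * (if xr f e then (1 : ℝ) else 0) := by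
      simp only [hcw, Finset.mul_sum]
      rw [Finset.sum_comm]
      refine Finset.sum_congr rfl fun e _ => ?_
      refine Finset.sum_congr rfl fun f _ => ?_
      ring
    rw [hswap]
    have hstep : ∑ e ∈ EG, w e * (if e ∈ ET then 1 + p else 1 - p ^ (r - 1))
        ≤ ∑ e ∈ EG, w e * ∑ f : V → Bool, μ f * (if xr f e then (1 : ℝ) else 0) := by
      refine Finset.sum_le_sum fun e he => ?_
      exact mul_le_mul_of_nonneg_left (hmarg e he) (hw e)
    refine le_trans ?_ hstep
    have hsplit : ∑ e ∈ EG, w e * (if e ∈ ET then 1 + p else 1 - p ^ (r - 1))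
        = (1 + p) * ∑ e ∈ ET, w e
          + (1 - p ^ (r - 1)) * ∑ e ∈ EG \ ET, w e := by
      rw [← Finset.sum_sdiff hsub]
      rw [Finset.sum_congr rfl (fun e he => by
        rw [if_neg (Finset.mem_sdiff.mp he).2]),
        Finset.sum_congr (rfl : ET = ET) (fun e he => by rw [if_pos he])]
      rw [Finset.mul_sum, Finset.mul_sum]
      simp only [mul_comm]
      ring
    rw [hsplit, Finset.sum_sdiff_eq_sub hsub, hTW, hGW]
    linarith [le_refl (0:ℝ)]
  -- extract a good coloring
  set B : ℝ := (p + 1) / 2 * totalWeight T w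
      + (1 - p ^ (r - 1)) / 2 * (totalWeight G w - totalWeight T w) with hB
  have h2B : 2 * B ≤ ∑ f : V → Bool, μ f * cw f := by
    rw [hB]; ring_nf; ring_nf at hexp; linarith
  have hex : ∃ f : V → Bool, B ≤ cw f := by
    by_contra hcon
    push_neg at hcon
    obtain ⟨f0, hf0⟩ : ∃ f : V → Bool, 0 < μ f := by
      by_contra hall
      push_neg at hall
      have : ∑ f : V → Bool, μ f ≤ 0 :=
        Finset.sum_nonpos fun f _ => hall f
      rw [hμsum] at this; linarith
    have hlt : ∑ f : V → Bool, μ f * cw f < ∑ f : V → Bool, μ f * B := by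
      refine Finset.sum_lt_sum (fun f _ => ?_) ⟨f0, Finset.mem_univ _, ?_⟩
      · exact mul_le_mul_of_nonneg_left (le_of_lt (hcon f)) (hμ0 f)
      · exact mul_lt_mul_of_pos_left (hcon f0) hf0
    rw [← Finset.sum_mul, hμsum] at hlt
    linarith
  obtain ⟨f, hf⟩ := hex
  refine ⟨{v | f v = true}, ?_⟩
  -- identify cutWeight with cw f
  have hcut : cutWeight G w {v | f v = true} = cw f := by
    rw [cutWeight]
    have hsetEq : {e ∈ G.edgeSet | ∃ x y, e = s(x, y) ∧ x ∈ {v | f v = true}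
        ∧ y ∉ {v | f v = true}}
        = ↑(G.edgeFinset.filter fun e => xr f e = true) := by
      ext e
      induction e using Sym2.ind with
      | _ a b =>
        simp only [Set.mem_setOf_eq, Finset.coe_filter, SimpleGraph.mem_edgeFinset,
          Set.mem_setOf_eq]
        constructor
        · rintro ⟨heG, x, y, hexy, hx, hy⟩
          refine ⟨heG, ?_⟩
          have hfx : f x = true := hx
          have hfy : f y = false := Bool.eq_false_iff.mpr (fun h => hy h)
          rw [hexy, xr_mk, hfx, hfy]
          rfl
        · rintro ⟨heG, hxr⟩
          refine ⟨heG, ?_⟩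
          rw [xr_mk] at hxr
          cases hfa : f a <;> cases hfb : f b <;> rw [hfa, hfb] at hxr <;>
            simp at hxr
          · exact ⟨b, a, Sym2.eq_swap, hfb, by simp [hfa]⟩
          · exact ⟨a, b, rfl, hfa, by simp [hfb]⟩
    rw [hsetEq, finsum_mem_coe_finset]
    simp only [hcw, hEG]
    rw [Finset.sum_filter]
    refine Finset.sum_congr rfl fun e _ => ?_
    by_cases h : xr f e = true <;> simp [h]
  rw [hcut]
  exact hf

end MaxCut
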